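/- Let n ≥ 1, let 0 ≤ α₁ < α₂ < ⋯ < αₙ ≤ 1, let a₁,…,aₙ, b₁,…,bₙ ≥ 0, and set μ_σ = Σᵢ aᵢ·δ_{αᵢ} and μ_ε = Σᵢ bᵢ·δ_{αᵢ} (Dirac measures on [0,1]). Then the thermodynamical restriction (T) holds for (μ_σ, μ_ε) if and only if aᵢ·bⱼ ≥ aⱼ·bᵢ for all 1 ≤ i < j ≤ n (i.e., the ratios aᵢ/bᵢ form a non-increasing chain a₁/b₁ ≥ a₂/b₂ ≥ ⋯ ≥ aₙ/bₙ, with the convention a/0 = ∞). -/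

import Mathlib

open MeasureTheory Complex Set
open scoped ENNReal

/-- The thermodynamical restriction (T): the signed measure `μ_ε × μ_σ − μ_σ × μ_ε`
is nonnegative on the triangle `Δ = {(α,β) ∈ [0,1]² : α > β}`. -/
def TDrestriction (μσ με : Measure ℝ) : Prop :=
  ∀ E : Set (ℝ × ℝ), MeasurableSet E →
    E ⊆ {p : ℝ × ℝ | p.2 < p.1 ∧ p.1 ∈ Set.Icc (0:ℝ) 1 ∧ p.2 ∈ Set.Icc (0:ℝ) 1} →
    (μσ.prod με) E ≤ (με.prod μσ) E

lemma finSum_isFinite {n : ℕ} (c : Fin n → ℝ≥0∞) (hc : ∀ i, c i ≠ ⊤) (x : Fin n → ℝ) :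
    IsFiniteMeasure (∑ i, c i • Measure.dirac (x i)) := by
  constructor
  rw [Measure.coe_finset_sum]
  simp only [Finset.sum_apply, Measure.smul_apply, smul_eq_mul]
  refine ENNReal.sum_lt_top.2 fun i _ => ?_
  simp [ENNReal.mul_lt_top, lt_top_iff_ne_top, hc i]

lemma prod_apply_eq {n : ℕ} (c d : Fin n → ℝ≥0∞) (hc : ∀ i, c i ≠ ⊤) (hd : ∀ i, d i ≠ ⊤)
    (x : Fin n → ℝ) {E : Set (ℝ × ℝ)} (hE : MeasurableSet E) :
    ((∑ i, c i • Measure.dirac (x i)).prod (∑ i, d i • Measure.dirac (x i))) E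
      = ∑ i, ∑ j, c i * d j * E.indicator 1 (x i, x j) := by
  have hν : IsFiniteMeasure (∑ i, d i • Measure.dirac (x i)) := finSum_isFinite d hd x
  rw [Measure.prod_apply hE, lintegral_finset_sum_measure]
  refine Finset.sum_congr rfl fun i _ => ?_
  rw [lintegral_smul_measure,
    lintegral_dirac' _ (measurable_measure_prodMk_left hE)]
  have : (∑ j, d j • Measure.dirac (x j)) (Prod.mk (x i) ⁻¹' E)
      = ∑ j, d j * E.indicator 1 (x i, x j) := by
    rw [Measure.coe_finset_sum]
    simp only [Finset.sum_apply, Measure.smul_apply, smul_eq_mul]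
    refine Finset.sum_congr rfl fun j _ => ?_
    rw [Measure.dirac_apply' _ (measurable_prodMk_left hE)]
    rfl
  rw [this, smul_eq_mul, Finset.mul_sum]
  refine Finset.sum_congr rfl fun j _ => ?_
  ring

theorem stmt_4 (n : ℕ) (hn : 1 ≤ n) (α : Fin n → ℝ) (hmono : StrictMono α)
    (hα0 : ∀ i, 0 ≤ α i) (hα1 : ∀ i, α i ≤ 1)
    (a b : Fin n → ℝ) (ha : ∀ i, 0 ≤ a i) (hb : ∀ i, 0 ≤ b i) :
    TDrestriction (∑ i, ENNReal.ofReal (a i) • Measure.dirac (α i))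
                  (∑ i, ENNReal.ofReal (b i) • Measure.dirac (α i))
      ↔ ∀ i j : Fin n, i < j → a j * b i ≤ a i * b j := by
  have hca : ∀ i, ENNReal.ofReal (a i) ≠ ⊤ := fun i => ENNReal.ofReal_ne_top
  have hcb : ∀ i, ENNReal.ofReal (b i) ≠ ⊤ := fun i => ENNReal.ofReal_ne_top
  constructor
  · intro hT i j hij
    set E : Set (ℝ × ℝ) := {(α j, α i)} with hEdef
    have hEm : MeasurableSet E := measurableSet_singleton _
    have hsub : E ⊆ {p : ℝ × ℝ | p.2 < p.1 ∧ p.1 ∈ Set.Icc (0:ℝ) 1 ∧ p.2 ∈ Set.Icc (0:ℝ) 1} := by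
      rintro p hp
      rw [hEdef, Set.mem_singleton_iff] at hp
      subst hp
      exact ⟨hmono hij, ⟨hα0 j, hα1 j⟩, ⟨hα0 i, hα1 i⟩⟩
    have h := hT E hEm hsub
    rw [prod_apply_eq _ _ hca hcb α hEm, prod_apply_eq _ _ hcb hca α hEm] at h
    have hind : ∀ k l : Fin n, E.indicator (1 : ℝ × ℝ → ℝ≥0∞) (α k, α l)
        = if k = j ∧ l = i then 1 else 0 := by
      intro k l
      by_cases hkl : k = j ∧ l = i
      · obtain ⟨rfl, rfl⟩ := hkl
        simp [hEdef, Set.indicator_of_mem]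
      · rw [if_neg hkl, Set.indicator_of_notMem]
        rw [hEdef, Set.mem_singleton_iff]
        intro hmem
        have h1 : α k = α j := congrArg Prod.fst hmem
        have h2 : α l = α i := congrArg Prod.snd hmem
        exact hkl ⟨hmono.injective h1, hmono.injective h2⟩
    simp only [hind] at h
    have hL : (∑ k, ∑ l, ENNReal.ofReal (a k) * ENNReal.ofReal (b l)
        * (if k = j ∧ l = i then (1:ℝ≥0∞) else 0))
        = ENNReal.ofReal (a j) * ENNReal.ofReal (b i) := by
      rw [Finset.sum_eq_single j, Finset.sum_eq_single i] <;> simp +contextual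
    have hR : (∑ k, ∑ l, ENNReal.ofReal (b k) * ENNReal.ofReal (a l)
        * (if k = j ∧ l = i then (1:ℝ≥0∞) else 0))
        = ENNReal.ofReal (b j) * ENNReal.ofReal (a i) := by
      rw [Finset.sum_eq_single j, Finset.sum_eq_single i] <;> simp +contextual
    rw [hL, hR, ← ENNReal.ofReal_mul (ha j), ← ENNReal.ofReal_mul (hb j)] at h
    have := (ENNReal.ofReal_le_ofReal_iff (mul_nonneg (hb j) (ha i))).1 h
    linarith [this]
  · intro hcond E hEm hsub
    rw [prod_apply_eq _ _ hca hcb α hEm, prod_apply_eq _ _ hcb hca α hEm]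
    refine Finset.sum_le_sum fun i _ => Finset.sum_le_sum fun j _ => ?_
    by_cases hmem : (α i, α j) ∈ E
    · have htri := hsub hmem
      have hji : j < i := by
        have : α j < α i := htri.1
        exact hmono.lt_iff_lt.1 this
      have : a i * b j ≤ a j * b i := hcond j i hji
      refine mul_le_mul_left ?_ _
      rw [← ENNReal.ofReal_mul (ha i), ← ENNReal.ofReal_mul (hb i)]
      exact ENNReal.ofReal_le_ofReal (by linarith)
    · simp [Set.indicator_of_notMem hmem]
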